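/- There exist nonzero scalars λ_1, …, λ_{md−1} ∈ ℂ such that, with D = diag(λ_1,…,λ_{md−1}), the matrix identity Φ(ν(s,t)) · D · Θ(s,t) = 0 holds for all (s,t) ∈ ℂ²; moreover, for every (s,t) ≠ (0,0) the d−1 columns of D·Θ(s,t) form a basis of the kernel of Φ(ν(s,t)) : ℂ^{md−1} → ℂ^{E+1}. (This is the concrete form of the isomorphism between the restriction of the kernel bundle W_{m,d} to the rational normal curve, pulled back to ℙ¹, and V_{d−2} ⊗ O_{ℙ¹}((1−m)d).) -/

import Mathlib

set_option maxHeartbeats 1000000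


open Finset Matrix

/-- Integer-guarded binomial coefficient: `0` for negative lower index. -/
def ich (n : ℕ) (k : ℤ) : ℤ := if 0 ≤ k then (n.choose k.toNat : ℤ) else 0

lemma ich_neg (n : ℕ) {k : ℤ} (h : k < 0) : ich n k = 0 := by
  simp [ich, not_le.mpr h]

lemma ich_coe (n a : ℕ) : ich n (a : ℤ) = (n.choose a : ℤ) := by
  simp [ich]

lemma ich_gt (n : ℕ) {k : ℤ} (h : (n : ℤ) < k) : ich n k = 0 := by
  rcases lt_or_ge k 0 with h0 | h0
  · exact ich_neg n h0
  · obtain ⟨a, rfl⟩ := Int.eq_ofNat_of_zero_le h0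
    rw [ich_coe]
    have : n < a := by exact_mod_cast h
    simp [Nat.choose_eq_zero_of_lt this]

/-- The key absorption identity, valid for all integer lower indices. -/
lemma ich_succ (n : ℕ) (k : ℤ) :
    ((n : ℤ) - k) * ich n k = (k + 1) * ich n (k + 1) := by
  rcases lt_or_ge k 0 with h | h
  · rw [ich_neg n h]
    rcases lt_or_ge (k+1) 0 with h1 | h1
    · rw [ich_neg n h1]; ring
    · have : k = -1 := by omega
      subst this; ring
  · obtain ⟨a, rfl⟩ := Int.eq_ofNat_of_zero_le h
    have h1 : ((a : ℤ) + 1) = ((a + 1 : ℕ) : ℤ) := by push_cast; ring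
    rw [ich_coe, h1, ich_coe]
    rcases le_or_gt a n with han | han
    · have := Nat.choose_succ_right_eq n a
      have hc : ((n.choose (a+1) * (a+1) : ℕ) : ℤ) = ((n.choose a * (n - a) : ℕ) : ℤ) := by
        exact_mod_cast congrArg (Nat.cast : ℕ → ℤ) this
      push_cast [Nat.cast_sub han] at hc
      push_cast
      linarith [hc]
    · rw [Nat.choose_eq_zero_of_lt han, Nat.choose_eq_zero_of_lt (by omega)]
      ring

/-- Pascal recursion for alternating binomial sums. -/
lemma alt_diff (n : ℕ) (f : ℕ → ℤ) :
    ∑ k ∈ range (n+2), (-1:ℤ)^k * (n+1).choose k * f k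
    = (∑ k ∈ range (n+1), (-1:ℤ)^k * n.choose k * f k)
      - ∑ k ∈ range (n+1), (-1:ℤ)^k * n.choose k * f (k+1) := by
  have hsplit : ∀ k, (-1:ℤ)^k * (n+1).choose k * f k
      = (-1:ℤ)^k * n.choose k * f k
        + (if k = 0 then 0 else (-1:ℤ)^k * (n.choose (k-1)) * f k) := by
    intro k
    cases k with
    | zero => simp
    | succ j =>
      rw [Nat.choose_succ_succ n j]
      simp only [Nat.succ_ne_zero, if_false, Nat.add_sub_cancel]
      push_cast; ring
  rw [Finset.sum_congr rfl (fun k _ => hsplit k), Finset.sum_add_distrib]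
  have hA : ∑ k ∈ range (n+2), (-1:ℤ)^k * n.choose k * f k
      = ∑ k ∈ range (n+1), (-1:ℤ)^k * n.choose k * f k := by
    rw [Finset.sum_range_succ]
    simp [Nat.choose_succ_self]
  have hB : (∑ k ∈ range (n+2),
        (if k = 0 then 0 else (-1:ℤ)^k * (n.choose (k-1)) * f k))
      = - ∑ k ∈ range (n+1), (-1:ℤ)^k * n.choose k * f (k+1) := by
    rw [Finset.sum_range_succ' (fun k => if k = 0 then 0 else (-1:ℤ)^k * (n.choose (k-1)) * f k)]
    simp only [Nat.succ_ne_zero, if_false, Nat.add_sub_cancel, if_pos rfl, add_zero]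
    have : ∀ k ∈ range (n+1), (-1:ℤ)^(k+1) * (n.choose k) * f (k+1)
        = -((-1:ℤ)^k * n.choose k * f (k+1)) := by
      intro k _; push_cast; ring
    rw [Finset.sum_congr rfl this, Finset.sum_neg_distrib]
    simp
  rw [hA, hB]; ring

/-- Iterated finite difference of a binomial coefficient. -/
lemma alt_sum_choose (q : ℕ) : ∀ n M : ℕ, n ≤ M →
    (∑ k ∈ range (n+1), (-1:ℤ)^k * n.choose k * ((M-k).choose q)) =
      if n ≤ q then (((M-n).choose (q-n) : ℕ) : ℤ) else 0 := by
  intro n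
  induction n with
  | zero => intro M _; simp
  | succ n ih =>
    intro M hM
    have hkey := alt_diff n (fun k => (((M-k).choose q : ℕ) : ℤ))
    have hre : (∑ k ∈ range (n+1), (-1:ℤ)^k * n.choose k * (((M-(k+1)).choose q : ℕ) : ℤ))
        = ∑ k ∈ range (n+1), (-1:ℤ)^k * n.choose k * ((((M-1)-k).choose q : ℕ) : ℤ) := by
      refine Finset.sum_congr rfl (fun k _ => ?_)
      have h : M-(k+1) = M-1-k := by omega
      rw [h]
    rw [show n+1+1 = n+2 from rfl] at hkey
    rw [hkey, hre, ih M (by omega), ih (M-1) (by omega)]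
    rcases Nat.lt_or_ge n q with hq | hq
    · rw [if_pos (by omega), if_pos (by omega), if_pos (by omega)]
      have h1 : M - n = (M - (n+1)) + 1 := by omega
      have h3 : M - 1 - n = M - (n+1) := by omega
      have h2 : q - n = (q - (n+1)) + 1 := by omega
      rw [h1, h3, h2, Nat.choose_succ_succ]
      push_cast; ring
    · rcases Nat.eq_or_lt_of_le hq with hq2 | hq2
      · rw [if_pos (by omega), if_pos (by omega), if_neg (by omega)]
        have h1 : q - n = 0 := by omega
        rw [h1]; simp
      · rw [if_neg (by omega), if_neg (by omega), if_neg (by omega)]; ring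

lemma alt_sum_choose_mul (n w q M : ℕ) (hM : n ≤ M) (h : w + q < n) :
    ∑ k ∈ range (n+1), (-1:ℤ)^k * n.choose k * (k.choose w) * ((M-k).choose q) = 0 := by
  have hw : w ≤ n := by omega
  have hsub : Finset.Ico w (n+1) ⊆ range (n+1) := by
    rw [Finset.range_eq_Ico]; exact Finset.Ico_subset_Ico (by omega) le_rfl
  rw [← Finset.sum_subset hsub (fun k hkr hk => ?_)]
  · rw [Finset.sum_Ico_eq_sum_range]
    have hcong : ∀ k ∈ range (n+1-w), (-1:ℤ)^(w+k) * n.choose (w+k) * ((w+k).choose w)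
        * ((M-(w+k)).choose q)
        = ((-1:ℤ)^w * n.choose w) * ((-1:ℤ)^k * (n-w).choose k * (((M-w)-k).choose q)) := by
      intro k hk
      simp only [Finset.mem_range] at hk
      have h1 : w + k ≤ n := by omega
      have h2 : n.choose (w+k) * ((w+k).choose w) = n.choose w * ((n-w).choose k) := by
        have := Nat.choose_mul (n := n) (Nat.le_add_right w k)
        simpa [Nat.add_sub_cancel_left] using this
      have h3 : M - (w+k) = (M-w) - k := by omega
      have h4 : ((n.choose (w+k)) : ℤ) * ((w+k).choose w)
          = (n.choose w : ℤ) * ((n-w).choose k) := by exact_mod_cast h2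
      rw [h3, pow_add]
      linear_combination ((-1:ℤ)^w * (-1:ℤ)^k * (((M-w-k).choose q : ℕ) : ℤ)) * h4
    rw [Finset.sum_congr rfl hcong, ← Finset.mul_sum]
    have : n + 1 - w = (n - w) + 1 := by omega
    rw [this]
    have hz := alt_sum_choose q (n-w) (M-w) (by omega)
    rw [if_neg (by omega)] at hz
    rw [hz, mul_zero]
  · simp only [Finset.mem_Ico, Finset.mem_range, not_and, not_lt] at hk hkr
    have hkw : k < w := by by_contra hc; push_neg at hc; omega
    rw [Nat.choose_eq_zero_of_lt hkw]
    push_cast; ring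

lemma alt_sum_two_choose (n x p q M : ℕ) (hM : n ≤ M) (h : p + q < n) :
    ∑ k ∈ range (n+1), (-1:ℤ)^k * n.choose k * ((x+k).choose p) * ((M-k).choose q) = 0 := by
  have hexp : ∀ k, ((x+k).choose p : ℤ)
      = ∑ ij ∈ Finset.HasAntidiagonal.antidiagonal p, (x.choose ij.1 : ℤ) * (k.choose ij.2 : ℤ) := by
    intro k
    rw [Nat.add_choose_eq]
    push_cast
    rfl
  have : ∀ k ∈ range (n+1), (-1:ℤ)^k * n.choose k * ((x+k).choose p) * ((M-k).choose q)
      = ∑ ij ∈ Finset.HasAntidiagonal.antidiagonal p,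
          (x.choose ij.1 : ℤ) * ((-1:ℤ)^k * n.choose k * (k.choose ij.2) * ((M-k).choose q)) := by
    intro k _
    rw [show (-1:ℤ)^k * n.choose k * ((x+k).choose p) * ((M-k).choose q)
        = ((x+k).choose p : ℤ) * ((-1:ℤ)^k * n.choose k * ((M-k).choose q)) by ring, hexp k,
      Finset.sum_mul]
    refine Finset.sum_congr rfl (fun ij _ => ?_)
    ring
  rw [Finset.sum_congr rfl this, Finset.sum_comm]
  refine Finset.sum_eq_zero (fun ij hij => ?_)
  rw [← Finset.mul_sum, alt_sum_choose_mul n ij.2 q M hM ?_, mul_zero]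
  have h2 : ij.1 + ij.2 = p := Finset.HasAntidiagonal.mem_antidiagonal.mp hij
  omega

lemma ich_zero (n : ℕ) : ich n 0 = 1 := by
  have := ich_coe n 0; simpa using this

/-- The closed form for the recursively defined coefficients. -/
def cf (d E i j : ℕ) : ℤ :=
  ((j-1).factorial : ℤ) *
    (ich (d-1) ((j:ℤ)+1-(i:ℤ)) * ich (E-1) ((i:ℤ)-2)
      - ich (d-1) ((j:ℤ)-(i:ℤ)) * ich (E-1) ((i:ℤ)-1))

lemma cf_zero_left (d E j : ℕ) : cf d E 0 j = 0 := by
  unfold cf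
  rw [ich_neg (E-1) (by norm_num), ich_neg (E-1) (by norm_num)]
  ring

lemma cf_zero_big (d E : ℕ) {i j : ℕ} (h : j + 1 < i) : cf d E i j = 0 := by
  unfold cf
  rw [ich_neg (d-1) (by omega), ich_neg (d-1) (by omega)]
  ring

lemma c_eq_cf (d m : ℕ) (hd : 2 ≤ d) (hm : 2 ≤ m)
    (c : ℕ → ℕ → ℤ)
    (hzero : ∀ i j, 1 ≤ j → j ≤ m * d - 1 → (i = 0 ∨ j + 1 < i) → c i j = 0)
    (h11 : c 1 1 = -1) (h21 : c 2 1 = 1)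
    (hrec1 : ∀ j, 2 ≤ j → j ≤ m * d - 1 →
      c 1 j = ((d : ℤ) - j + 1) * c 1 (j - 1))
    (hrec2 : ∀ j, 2 ≤ j → j ≤ m * d - 1 → ∀ i, 2 ≤ i → i ≤ j →
      c i j = ((d : ℤ) - j + i) * c i (j - 1)
        + ((((m - 1) * d : ℕ) : ℤ) - i + 2) * c (i - 1) (j - 1))
    (hrec3 : ∀ j, 2 ≤ j → j ≤ m * d - 1 →
      c (j + 1) j = ((((m - 1) * d : ℕ) : ℤ) - j + 1) * c j (j - 1)) :
    ∀ j, 1 ≤ j → j ≤ m * d - 1 → ∀ i, c i j = cf d ((m-1)*d) i j := by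
  set E := (m-1)*d with hE
  have hEd : d ≤ E := by
    calc d = 1 * d := (one_mul d).symm
    _ ≤ (m-1) * d := Nat.mul_le_mul_right d (by omega)
  have hEZ : ((E:ℤ)) = (m-1) * d := by rw [hE]; push_cast [Nat.cast_sub (by omega : 1 ≤ m)]; ring
  intro j
  induction j with
  | zero => omega
  | succ J IH =>
    intro _ hJN i
    rcases Nat.lt_or_ge J 1 with hJ1 | hJ1
    · -- base case: J + 1 = 1
      interval_cases J
      rcases i with _ | _ | _ | i
      · rw [hzero 0 1 (by omega) (by omega) (Or.inl rfl), cf_zero_left]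
      · rw [h11]; unfold cf
        rw [show ((1:ℕ):ℤ)+1-((1:ℕ):ℤ) = ((1:ℕ):ℤ) by norm_num,
          show ((1:ℕ):ℤ)-((1:ℕ):ℤ) = ((0:ℕ):ℤ) by norm_num,
          show ((1:ℕ):ℤ)-2 = (-1:ℤ) by norm_num,
          show ((1:ℕ):ℤ)-1 = ((0:ℕ):ℤ) by norm_num,
          ich_coe, ich_coe, ich_coe, ich_neg (E-1) (by norm_num)]
        simp
      · rw [h21]; unfold cf
        rw [show ((1:ℕ):ℤ)+1-((2:ℕ):ℤ) = ((0:ℕ):ℤ) by norm_num,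
          show ((1:ℕ):ℤ)-((2:ℕ):ℤ) = (-1:ℤ) by norm_num,
          show ((2:ℕ):ℤ)-2 = ((0:ℕ):ℤ) by norm_num,
          ich_coe, ich_coe, ich_neg (d-1) (by norm_num)]
        simp
      · rw [hzero (i+3) 1 (by omega) (by omega) (Or.inr (by omega)),
          cf_zero_big d E (by omega)]
    · -- inductive step: J ≥ 1, current index J+1 ≥ 2
      have hJ2 : 2 ≤ J + 1 := by omega
      have hJN' : J + 1 ≤ m*d - 1 := hJN
      have IH' : ∀ i, c i J = cf d E i J := IH (by omega) (by omega)
      have hfacJ : ((J.factorial : ℕ) : ℤ) = (J:ℤ) * ((J-1).factorial : ℤ) := by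
        have h0 : J - 1 + 1 = J := by omega
        have h1 := Nat.factorial_succ (J-1)
        rw [h0] at h1
        exact_mod_cast congrArg (fun n : ℕ => (n : ℤ)) h1
      rcases Nat.lt_or_ge (J+2) i with hbig | hle
      · rw [hzero i (J+1) (by omega) (by omega) (Or.inr (by omega)),
          cf_zero_big d E (by omega)]
      rcases Nat.eq_zero_or_pos i with rfl | hi1
      · rw [hzero 0 (J+1) (by omega) (by omega) (Or.inl rfl), cf_zero_left]
      have hd' : ((d-1:ℕ):ℤ) = (d:ℤ)-1 := by omega
      have hE2 : 2 ≤ E := by omega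
      have hF' : ((E-1:ℕ):ℤ) = (E:ℤ)-1 := by omega
      rcases Nat.eq_or_lt_of_le hi1 with hi1' | hi2
      · -- i = 1
        have hi : i = 1 := by omega
        subst hi
        have h := hrec1 (J+1) hJ2 hJN'
        rw [show J+1-1 = J from rfl, IH' 1] at h
        push_cast at h
        rw [h]
        simp only [cf, Nat.add_sub_cancel, Nat.cast_one]
        rw [show (1:ℤ)-2 = (-1:ℤ) by norm_num, show (1:ℤ)-1 = (0:ℤ) by norm_num,
          ich_zero, ich_neg (E-1) (show (-1:ℤ) < 0 by norm_num)]
        rw [show ((J+1:ℕ):ℤ)-1 = (J:ℤ) by omega]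
        have r1 := ich_succ (d-1) ((J:ℤ)-1)
        rw [hd', show (J:ℤ)-1+1 = (J:ℤ) by ring] at r1
        linear_combination (ich (d-1) (J:ℤ)) * hfacJ
          - (((J-1).factorial : ℕ) : ℤ) * r1
      rcases Nat.lt_or_ge (J+1) i with hitop | hile
      · -- i = J + 2 : bottom edge of the band
        have hi : i = J + 2 := by omega
        subst hi
        have h := hrec3 (J+1) hJ2 hJN'
        rw [show J+1-1 = J from rfl, IH' (J+1)] at h
        rw [show J+1+1 = J+2 from rfl] at h
        push_cast at h
        rw [h]
        simp only [cf, Nat.add_sub_cancel]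
        rw [show ((J+1:ℕ):ℤ)+1-((J+2:ℕ):ℤ) = (0:ℤ) by omega,
          show ((J+1:ℕ):ℤ)-((J+2:ℕ):ℤ) = (-1:ℤ) by omega,
          show ((J+2:ℕ):ℤ)-2 = (J:ℤ) by omega,
          show (J:ℤ)+1-((J+1:ℕ):ℤ) = (0:ℤ) by omega,
          show (J:ℤ)-((J+1:ℕ):ℤ) = (-1:ℤ) by omega,
          show ((J+1:ℕ):ℤ)-2 = (J:ℤ)-1 by omega,
          ich_zero, ich_neg (d-1) (show (-1:ℤ) < 0 by norm_num)]
        have r1 := ich_succ (E-1) ((J:ℤ)-1)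
        rw [hF', show (J:ℤ)-1+1 = (J:ℤ) by ring] at r1
        linear_combination (-(ich (E-1) (J:ℤ))) * hfacJ
          + (((J-1).factorial : ℕ) : ℤ) * r1
      · -- 2 ≤ i ≤ J+1 : interior recurrence
        have h := hrec2 (J+1) hJ2 hJN' i hi2 hile
        rw [show J+1-1 = J from rfl, IH' i, IH' (i-1)] at h
        push_cast at h
        rw [h]
        simp only [cf, Nat.add_sub_cancel]
        rw [show ((J+1:ℕ):ℤ)+1-(i:ℤ) = (J:ℤ)+1-(i:ℤ)+1 by omega,
          show ((J+1:ℕ):ℤ)-(i:ℤ) = (J:ℤ)+1-(i:ℤ) by omega,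
          show (J:ℤ)+1-((i-1:ℕ):ℤ) = (J:ℤ)+1-(i:ℤ)+1 by omega,
          show (J:ℤ)-((i-1:ℕ):ℤ) = (J:ℤ)+1-(i:ℤ) by omega,
          show ((i-1:ℕ):ℤ)-2 = (i:ℤ)-3 by omega,
          show ((i-1:ℕ):ℤ)-1 = (i:ℤ)-2 by omega]
        have r1 := ich_succ (d-1) ((J:ℤ)+1-(i:ℤ))
        have r2 := ich_succ (d-1) ((J:ℤ)-(i:ℤ))
        have r3 := ich_succ (E-1) ((i:ℤ)-3)
        have r4 := ich_succ (E-1) ((i:ℤ)-2)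
        rw [hd'] at r1 r2
        rw [hF'] at r3 r4
        rw [show (J:ℤ)-(i:ℤ)+1 = (J:ℤ)+1-(i:ℤ) by ring] at r2
        rw [show (i:ℤ)-3+1 = (i:ℤ)-2 by ring] at r3
        rw [show (i:ℤ)-2+1 = (i:ℤ)-1 by ring] at r4
        set X : ℤ := (((J-1).factorial : ℕ) : ℤ) with hX
        set P0 := ich (d-1) ((J:ℤ)-(i:ℤ)) with hP0
        set P1 := ich (d-1) ((J:ℤ)+1-(i:ℤ)) with hP1
        set P2 := ich (d-1) ((J:ℤ)+1-(i:ℤ)+1) with hP2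
        set Q1 := ich (E-1) ((i:ℤ)-3) with hQ1
        set Q2 := ich (E-1) ((i:ℤ)-2) with hQ2
        set Q3 := ich (E-1) ((i:ℤ)-1) with hQ3
        linear_combination (-(P2*Q2 - P1*Q3)) * hfacJ + X*Q2*r1 - X*Q3*r2 + X*P2*r3 - X*P1*r4

/-- Factorization of the weighted band entries into binomial products. -/
lemma fact_split (D A B p q : ℕ) (hpq : (A:ℤ)-p + ((B:ℤ)-q) = D) :
    (A.factorial : ℤ) * (B.factorial : ℤ) * ich D ((A:ℤ)-(p:ℤ))
    = (D.factorial : ℤ) * (p.factorial : ℤ) * (q.factorial : ℤ)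
      * (A.choose p : ℤ) * (B.choose q : ℤ) := by
  rcases Nat.lt_or_ge A p with hAp | hAp
  · rw [ich_neg D (by omega), Nat.choose_eq_zero_of_lt hAp]
    ring
  rcases Nat.lt_or_ge B q with hBq | hBq
  · rw [ich_gt D (by omega), Nat.choose_eq_zero_of_lt hBq]
    ring
  · have harg : (A:ℤ)-(p:ℤ) = ((A-p : ℕ) : ℤ) := by omega
    rw [harg, ich_coe]
    have hr : A - p ≤ D := by omega
    have h1 := Nat.choose_mul_factorial_mul_factorial hAp
    have h2 := Nat.choose_mul_factorial_mul_factorial hBq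
    have h3 := Nat.choose_mul_factorial_mul_factorial hr
    have hDr : D - (A-p) = B - q := by omega
    rw [hDr] at h3
    have key : A.factorial * B.factorial * (D.choose (A-p))
        = D.factorial * p.factorial * q.factorial * (A.choose p) * (B.choose q) := by
      calc A.factorial * B.factorial * (D.choose (A-p))
          = (A.choose p * p.factorial * (A-p).factorial)
            * (B.choose q * q.factorial * (B-q).factorial) * (D.choose (A-p)) := by
            rw [h1, h2]
        _ = (D.choose (A-p) * (A-p).factorial * (B-q).factorial)
            * p.factorial * q.factorial * (A.choose p) * (B.choose q) := by ring
        _ = D.factorial * p.factorial * q.factorial * (A.choose p) * (B.choose q) := by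
            rw [h3]
    exact_mod_cast congrArg (fun n : ℕ => (n : ℤ)) key

/-- Each of the two halves of the kernel-identity sum vanishes. -/
lemma sum_part (d E N p q l : ℕ) (hN : N = E+d-1) (hd2 : 2 ≤ d) (hdE : d ≤ E)
    (hl1 : 1 ≤ l) (hld : l ≤ d-1) (hpq : p + q + 1 = E) :
    ∑ j ∈ range N, ((j.factorial : ℤ) * (((N-(j+1)).factorial : ℤ)) * ich (d-1) ((j:ℤ)-(p:ℤ)) *
      (if l ≤ j+1 then (-1:ℤ)^(j+1-l) * ((E.choose (j+1-l) : ℕ) : ℤ) else 0)) = 0 := by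
  have hsub : Finset.Ico (l-1) (l-1+(E+1)) ⊆ range N := by
    rw [Finset.range_eq_Ico]
    exact Finset.Ico_subset_Ico (by omega) (by omega)
  rw [← Finset.sum_subset hsub ?_]
  · rw [Finset.sum_Ico_eq_sum_range]
    rw [show l-1+(E+1)-(l-1) = E+1 by omega]
    have hterm : ∀ k ∈ range (E+1),
        (((l-1+k).factorial : ℤ) * (((N-(l-1+k+1)).factorial : ℤ))
          * ich (d-1) (((l-1+k : ℕ):ℤ)-(p:ℤ)) *
          (if l ≤ l-1+k+1 then (-1:ℤ)^(l-1+k+1-l) * ((E.choose (l-1+k+1-l) : ℕ) : ℤ) else 0))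
        = (((d-1).factorial : ℤ) * (p.factorial : ℤ) * (q.factorial : ℤ)) *
            ((-1:ℤ)^k * (E.choose k : ℕ) * (((l-1+k).choose p : ℕ) : ℤ)
              * (((N-l-k).choose q : ℕ) : ℤ)) := by
      intro k hk
      simp only [Finset.mem_range] at hk
      rw [if_pos (by omega), show l-1+k+1-l = k by omega,
        show N-(l-1+k+1) = N-l-k by omega,
        fact_split (d-1) (l-1+k) (N-l-k) p q (by omega)]
      ring
    rw [Finset.sum_congr rfl hterm, ← Finset.mul_sum]
    have := alt_sum_two_choose E (l-1) p q (N-l) (by omega) (by omega)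
    rw [this, mul_zero]
  · intro j hj hj2
    simp only [Finset.mem_range] at hj
    simp only [Finset.mem_Ico, not_and, not_lt] at hj2
    rcases Nat.lt_or_ge j (l-1) with hlt | hge
    · rw [if_neg (by omega)]
      ring
    · have hbig : l-1+(E+1) ≤ j := hj2 hge
      rw [if_pos (by omega), Nat.choose_eq_zero_of_lt (by omega)]
      push_cast
      ring

/-- The full kernel identity: the weighted alternating sums of the `cf` vanish. -/
lemma Ssum_vanish (d E N i l : ℕ) (hN : N = E+d-1) (hd2 : 2 ≤ d) (hdE : d ≤ E)
    (hi1 : 1 ≤ i) (hiE : i ≤ E+1) (hl1 : 1 ≤ l) (hld : l ≤ d-1) :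
    ∑ j ∈ range N, (cf d E i (j+1) * (((N-(j+1)).factorial : ℤ)) *
      (if l ≤ j+1 then (-1:ℤ)^(j+1-l) * ((E.choose (j+1-l) : ℕ) : ℤ) else 0)) = 0 := by
  have key : ∀ p q : ℕ, p + q + 1 = E →
      ∑ j ∈ range N, ((j.factorial : ℤ) * (((N-(j+1)).factorial : ℤ))
        * ich (d-1) ((j:ℤ)-(p:ℤ)) *
        (if l ≤ j+1 then (-1:ℤ)^(j+1-l) * ((E.choose (j+1-l) : ℕ) : ℤ) else 0)) = 0 :=
    fun p q hpq => sum_part d E N p q l hN hd2 hdE hl1 hld hpq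
  rcases Nat.eq_or_lt_of_le hi1 with h1 | h2
  · -- i = 1 : first half of cf is zero
    have hi : i = 1 := h1.symm
    subst hi
    have hcf : ∀ j, cf d E 1 (j+1)
        = -((j.factorial : ℤ) * ich (d-1) ((j:ℤ)-((0:ℕ):ℤ))) := by
      intro j
      simp only [cf, Nat.add_sub_cancel, Nat.cast_one]
      rw [show (1:ℤ)-2 = (-1:ℤ) by norm_num, show (1:ℤ)-1 = (0:ℤ) by norm_num,
        ich_neg (E-1) (show (-1:ℤ) < 0 by norm_num), ich_zero,
        show ((j+1:ℕ):ℤ)-1 = (j:ℤ)-((0:ℕ):ℤ) by push_cast; ring]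
      ring
    have := key 0 (E-1) (by omega)
    calc ∑ j ∈ range N, (cf d E 1 (j+1) * (((N-(j+1)).factorial : ℤ)) *
          (if l ≤ j+1 then (-1:ℤ)^(j+1-l) * ((E.choose (j+1-l) : ℕ) : ℤ) else 0))
        = -∑ j ∈ range N, ((j.factorial : ℤ) * (((N-(j+1)).factorial : ℤ))
            * ich (d-1) ((j:ℤ)-((0:ℕ):ℤ)) *
            (if l ≤ j+1 then (-1:ℤ)^(j+1-l) * ((E.choose (j+1-l) : ℕ) : ℤ) else 0)) := by
          rw [← Finset.sum_neg_distrib]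
          exact Finset.sum_congr rfl (fun j _ => by rw [hcf j]; ring)
      _ = 0 := by rw [this]; ring
  · -- 2 ≤ i
    rcases Nat.lt_or_ge i (E+1) with hiE' | hiE''
    · -- 2 ≤ i ≤ E : both halves contribute
      have hcf : ∀ j, cf d E i (j+1) * (((N-(j+1)).factorial : ℤ)) *
          (if l ≤ j+1 then (-1:ℤ)^(j+1-l) * ((E.choose (j+1-l) : ℕ) : ℤ) else 0)
          = ich (E-1) ((i:ℤ)-2) *
              ((j.factorial : ℤ) * (((N-(j+1)).factorial : ℤ))
                * ich (d-1) ((j:ℤ)-((i-2:ℕ):ℤ)) *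
                (if l ≤ j+1 then (-1:ℤ)^(j+1-l) * ((E.choose (j+1-l) : ℕ) : ℤ) else 0))
            - ich (E-1) ((i:ℤ)-1) *
              ((j.factorial : ℤ) * (((N-(j+1)).factorial : ℤ))
                * ich (d-1) ((j:ℤ)-((i-1:ℕ):ℤ)) *
                (if l ≤ j+1 then (-1:ℤ)^(j+1-l) * ((E.choose (j+1-l) : ℕ) : ℤ) else 0)) := by
        intro j
        simp only [cf, Nat.add_sub_cancel]
        rw [show ((j+1:ℕ):ℤ)+1-(i:ℤ) = (j:ℤ)-((i-2:ℕ):ℤ) by omega,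
          show ((j+1:ℕ):ℤ)-(i:ℤ) = (j:ℤ)-((i-1:ℕ):ℤ) by omega]
        ring
      rw [Finset.sum_congr rfl (fun j _ => hcf j), Finset.sum_sub_distrib,
        ← Finset.mul_sum, ← Finset.mul_sum,
        key (i-2) (E-i+1) (by omega), key (i-1) (E-i) (by omega)]
      ring
    · -- i = E+1 : second half of cf is zero
      have hi : i = E+1 := by omega
      subst hi
      have hcf : ∀ j, cf d E (E+1) (j+1)
          = (j.factorial : ℤ) * ich (d-1) ((j:ℤ)-((E-1:ℕ):ℤ)) * ich (E-1) (((E+1:ℕ):ℤ)-2) := by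
        intro j
        simp only [cf, Nat.add_sub_cancel]
        rw [show ((E+1:ℕ):ℤ)-1 = ((E:ℕ):ℤ) by push_cast; ring, ich_gt (E-1) (show ((E-1:ℕ):ℤ) < ((E:ℕ):ℤ) by omega),
          show ((j+1:ℕ):ℤ)+1-((E+1:ℕ):ℤ) = (j:ℤ)-((E-1:ℕ):ℤ) by omega]
        ring
      have := key (E-1) 0 (by omega)
      calc ∑ j ∈ range N, (cf d E (E+1) (j+1) * (((N-(j+1)).factorial : ℤ)) *
            (if l ≤ j+1 then (-1:ℤ)^(j+1-l) * ((E.choose (j+1-l) : ℕ) : ℤ) else 0))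
          = ich (E-1) (((E+1:ℕ):ℤ)-2) *
              ∑ j ∈ range N, ((j.factorial : ℤ) * (((N-(j+1)).factorial : ℤ))
              * ich (d-1) ((j:ℤ)-((E-1:ℕ):ℤ)) *
              (if l ≤ j+1 then (-1:ℤ)^(j+1-l) * ((E.choose (j+1-l) : ℕ) : ℤ) else 0)) := by
            rw [Finset.mul_sum]
            exact Finset.sum_congr rfl (fun j _ => by rw [hcf j]; ring)
        _ = 0 := by rw [this]; ring

/-- Triangular families of vectors are linearly independent (pivot version:
each later vector vanishes at the pivot of an earlier one). -/
lemma tri_indep {n N : ℕ} (v : Fin n → (Fin N → ℂ)) (r : Fin n → Fin N)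
    (hdiag : ∀ k, v k (r k) ≠ 0)
    (htri : ∀ k k' : Fin n, k < k' → v k' (r k) = 0) :
    LinearIndependent ℂ v := by
  rw [Fintype.linearIndependent_iff]
  intro g hg
  have H : ∀ j : ℕ, ∀ k : Fin n, (k : ℕ) = j → g k = 0 := by
    intro j
    induction j using Nat.strong_induction_on with
    | _ j IH =>
      intro k hk
      have hg' := congrFun hg (r k)
      rw [Finset.sum_apply, Pi.zero_apply] at hg'
      rw [Finset.sum_eq_single k ?_ (by simp)] at hg'
      · simp only [Pi.smul_apply, smul_eq_mul] at hg'
        rcases mul_eq_zero.mp hg' with h | h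
        · exact h
        · exact absurd h (hdiag k)
      · intro k' _ hne
        rcases lt_or_gt_of_ne hne with hlt | hgt
        · rw [IH (k' : ℕ) (by omega) k' rfl]
          simp
        · rw [Pi.smul_apply, htri k k' hgt, smul_zero]
  exact fun k => H k k rfl

/-- Mirrored version: each earlier vector vanishes at the pivot of a later one. -/
lemma tri_indep' {n N : ℕ} (v : Fin n → (Fin N → ℂ)) (r : Fin n → Fin N)
    (hdiag : ∀ k, v k (r k) ≠ 0)
    (htri : ∀ k k' : Fin n, k < k' → v k (r k') = 0) :
    LinearIndependent ℂ v := by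
  have h := tri_indep (v ∘ Fin.revPerm) (r ∘ Fin.revPerm)
    (fun k => hdiag _)
    (fun k k' hlt => htri _ _ (by
      simp only [Fin.revPerm_apply]
      exact Fin.rev_lt_rev.mpr hlt))
  exact (linearIndependent_equiv Fin.revPerm).mp h

/-- `cf` vanishes beyond the upper band edge. -/
lemma cf_hi (d E : ℕ) (hd : 1 ≤ d) {i j : ℕ} (h : i + d ≤ j) : cf d E i j = 0 := by
  unfold cf
  rw [ich_gt (d-1) (show ((d-1:ℕ):ℤ) < (j:ℤ)+1-(i:ℤ) by omega),
    ich_gt (d-1) (show ((d-1:ℕ):ℤ) < (j:ℤ)-(i:ℤ) by omega)]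
  ring

/-- The bottom band-edge values of `cf` are nonzero. -/
lemma cf_bottom (d E j : ℕ) (hj : 1 ≤ j) (hjE : j ≤ E) : cf d E (j+1) j ≠ 0 := by
  unfold cf
  rw [show (j:ℤ)+1-((j+1:ℕ):ℤ) = (0:ℤ) by omega, ich_zero,
    ich_neg (d-1) (show (j:ℤ)-((j+1:ℕ):ℤ) < 0 by omega),
    show ((j+1:ℕ):ℤ)-2 = ((j-1:ℕ):ℤ) by omega, ich_coe]
  simp only [one_mul, zero_mul, sub_zero]
  exact mul_ne_zero (Int.natCast_ne_zero.mpr (Nat.factorial_ne_zero _))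
    (Int.natCast_ne_zero.mpr (Nat.choose_pos (by omega)).ne')

/-- The top band-edge values of `cf` are nonzero. -/
lemma cf_top (d E i : ℕ) (hd : 1 ≤ d) (hi : 1 ≤ i) (hiE : i ≤ E) : cf d E i (i+d-1) ≠ 0 := by
  unfold cf
  rw [show ((i+d-1:ℕ):ℤ)+1-(i:ℤ) = ((d:ℕ):ℤ) by omega, ich_gt (d-1) (show ((d-1:ℕ):ℤ) < ((d:ℕ):ℤ) by omega),
    show ((i+d-1:ℕ):ℤ)-(i:ℤ) = ((d-1:ℕ):ℤ) by omega, ich_coe, Nat.choose_self,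
    show (i:ℤ)-1 = ((i-1:ℕ):ℤ) by omega, ich_coe]
  push_cast
  simp only [one_mul, zero_mul, zero_sub, mul_neg, neg_ne_zero]
  exact mul_ne_zero (by exact_mod_cast Nat.factorial_ne_zero _)
    (by exact_mod_cast (Nat.choose_pos (show i-1 ≤ E-1 by omega)).ne')


/-- The `(E+1) × (md-1)` matrix of linear forms `Φ(y)`, with entries
`c_{i,j} · y_{j-i+2}` (1-based indices) when `1 ≤ j-i+2 ≤ d+1`, and `0` otherwise. -/
noncomputable def Phi (d m : ℕ) (c : ℕ → ℕ → ℤ) (y : Fin (d + 1) → ℂ) :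
    Matrix (Fin ((m - 1) * d + 1)) (Fin (m * d - 1)) ℂ :=
  fun i j =>
    if h : i.1 ≤ j.1 + 1 ∧ j.1 + 1 ≤ i.1 + d then
      (c (i.1 + 1) (j.1 + 1) : ℂ) * y ⟨j.1 + 1 - i.1, by omega⟩
    else 0

/-- The degree-`d` Veronese parametrization
`ν(s,t) = (s^d, s^{d-1}t, …, t^d) ∈ ℂ^{d+1}`. -/
noncomputable def nu (d : ℕ) (s t : ℂ) : Fin (d + 1) → ℂ :=
  fun k => s ^ (d - k.1) * t ^ k.1

/-- The `(md-1) × (d-1)` matrix `Θ(s,t)` with (1-based) entries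
`(-1)^{i-ℓ}·C(E,i-ℓ)·s^{i-ℓ}·t^{E-(i-ℓ)}` for `0 ≤ i-ℓ ≤ E` (where `E = (m-1)d`),
and `0` otherwise. -/
noncomputable def Theta (d m : ℕ) (s t : ℂ) : Matrix (Fin (m * d - 1)) (Fin (d - 1)) ℂ :=
  fun i l =>
    if l.1 ≤ i.1 ∧ i.1 ≤ l.1 + (m - 1) * d then
      (-1 : ℂ) ^ (i.1 - l.1) * (((m - 1) * d).choose (i.1 - l.1) : ℂ)
        * s ^ (i.1 - l.1) * t ^ ((m - 1) * d - (i.1 - l.1))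
    else 0

/-- There are nonzero scalars `λ₁, …, λ_{md-1}` such that, with `D = diag(λ)`,
`Φ(ν(s,t)) · D · Θ(s,t) = 0` for all `(s,t)`, and for `(s,t) ≠ (0,0)` the `d-1`
columns of `D·Θ(s,t)` form a basis of the kernel of `Φ(ν(s,t)) : ℂ^{md-1} → ℂ^{E+1}`. -/
theorem kernel_basis_via_Theta (d m : ℕ) (hd : 2 ≤ d) (hm : 2 ≤ m)
    (c : ℕ → ℕ → ℤ)
    (hzero : ∀ i j, 1 ≤ j → j ≤ m * d - 1 → (i = 0 ∨ j + 1 < i) → c i j = 0)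
    (h11 : c 1 1 = -1) (h21 : c 2 1 = 1)
    (hrec1 : ∀ j, 2 ≤ j → j ≤ m * d - 1 →
      c 1 j = ((d : ℤ) - j + 1) * c 1 (j - 1))
    (hrec2 : ∀ j, 2 ≤ j → j ≤ m * d - 1 → ∀ i, 2 ≤ i → i ≤ j →
      c i j = ((d : ℤ) - j + i) * c i (j - 1)
        + ((((m - 1) * d : ℕ) : ℤ) - i + 2) * c (i - 1) (j - 1))
    (hrec3 : ∀ j, 2 ≤ j → j ≤ m * d - 1 →
      c (j + 1) j = ((((m - 1) * d : ℕ) : ℤ) - j + 1) * c j (j - 1)) :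
    ∃ lam : Fin (m * d - 1) → ℂ, (∀ j, lam j ≠ 0) ∧
      ∀ s t : ℂ,
        Phi d m c (nu d s t) * (Matrix.diagonal lam * Theta d m s t) = 0 ∧
        (¬(s = 0 ∧ t = 0) →
          LinearIndependent ℂ
            (fun l : Fin (d - 1) => (Matrix.diagonal lam * Theta d m s t)ᵀ l) ∧
          LinearMap.ker (Phi d m c (nu d s t)).mulVecLin
            = Submodule.span ℂ
                (Set.range fun l : Fin (d - 1) =>
                  (Matrix.diagonal lam * Theta d m s t)ᵀ l)) := by
  have hE1 : (m-1)*d + d = m*d := by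
    have h0 : (m-1)+1 = m := by omega
    calc (m-1)*d + d = ((m-1)+1)*d := by ring
    _ = m*d := by rw [h0]
  have hdE : d ≤ (m-1)*d := by
    calc d = 1*d := (one_mul d).symm
    _ ≤ (m-1)*d := Nat.mul_le_mul_right d (by omega)
  have hc := c_eq_cf d m hd hm c hzero h11 h21 hrec1 hrec2 hrec3
  classical
  set lam : Fin (m*d-1) → ℂ := fun j => (((m*d-1) - (j.1+1)).factorial : ℂ) with hlam
  have hlam0 : ∀ j, lam j ≠ 0 := fun j => Nat.cast_ne_zero.mpr (Nat.factorial_ne_zero _)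
  refine ⟨lam, hlam0, ?_⟩
  intro s t
  -- the vanishing of the matrix product
  have hprod : Phi d m c (nu d s t) * (Matrix.diagonal lam * Theta d m s t) = 0 := by
    ext i l
    rw [Matrix.mul_apply, Matrix.zero_apply]
    have hiE : i.1 ≤ (m-1)*d := by have := i.isLt; omega
    have hlD : l.1 < d-1 := l.isLt
    have hterm : ∀ j : Fin (m*d-1),
        Phi d m c (nu d s t) i j * (Matrix.diagonal lam * Theta d m s t) j l
        = ((cf d ((m-1)*d) (i.1+1) (j.1+1) * ((((m-1)*d+d-1)-(j.1+1)).factorial : ℤ)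
            * (if l.1+1 ≤ j.1+1 then
                (-1:ℤ)^(j.1+1-(l.1+1)) * ((((m-1)*d).choose (j.1+1-(l.1+1)) : ℕ) : ℤ)
              else 0) : ℤ) : ℂ)
          * s^(d + i.1 - (l.1+1)) * t^((m-1)*d + 1 + l.1 - i.1) := by
      intro j
      have hjN := j.isLt
      rw [Matrix.diagonal_mul]
      simp only [Phi, Theta, hlam, nu]
      by_cases hband : i.1 ≤ j.1 + 1 ∧ j.1 + 1 ≤ i.1 + d
      · rw [dif_pos hband]
        by_cases hth : l.1 ≤ j.1 ∧ j.1 ≤ l.1 + (m-1)*d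
        · rw [if_pos hth, if_pos (by omega)]
          rw [hc (j.1+1) (by omega) (by omega) (i.1+1)]
          rw [show j.1+1-(l.1+1) = j.1-l.1 by omega,
            show (m*d-1) - (j.1+1) = ((m-1)*d+d-1)-(j.1+1) by omega]
          push_cast
          rw [show d + i.1 - (l.1+1) = (d - (j.1+1-i.1)) + (j.1-l.1) by omega,
            show (m-1)*d + 1 + l.1 - i.1 = (j.1+1-i.1) + ((m-1)*d-(j.1-l.1)) by omega,
            pow_add, pow_add]
          ring
        · rw [if_neg hth]
          rcases not_and_or.mp hth with h | h
          · rw [if_neg (by omega)]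
            push_cast
            ring
          · rw [if_pos (by omega), show j.1+1-(l.1+1) = j.1-l.1 by omega,
              Nat.choose_eq_zero_of_lt (by omega)]
            push_cast
            ring
      · rw [dif_neg hband]
        have hcf0 : cf d ((m-1)*d) (i.1+1) (j.1+1) = 0 := by
          rcases not_and_or.mp hband with h | h
          · exact cf_zero_big _ _ (by omega)
          · exact cf_hi _ _ (by omega) (by omega)
        rw [hcf0]
        push_cast
        ring
    rw [Finset.sum_congr rfl (fun j _ => hterm j), ← Finset.sum_mul, ← Finset.sum_mul,
      ← Int.cast_sum]
    rw [Fin.sum_univ_eq_sum_range (fun jn =>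
      (cf d ((m-1)*d) (i.1+1) (jn+1) * ((((m-1)*d+d-1)-(jn+1)).factorial : ℤ)
        * (if l.1+1 ≤ jn+1 then
            (-1:ℤ)^(jn+1-(l.1+1)) * ((((m-1)*d).choose (jn+1-(l.1+1)) : ℕ) : ℤ)
          else 0) : ℤ)) (m*d-1)]
    rw [show m*d-1 = (m-1)*d+d-1 by omega]
    rw [Ssum_vanish d ((m-1)*d) ((m-1)*d+d-1) (i.1+1) (l.1+1) rfl hd hdE (by omega) (by omega)
      (by omega) (by omega)]
    norm_num
  refine ⟨hprod, ?_⟩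
  intro hst
  have hst' : s ≠ 0 ∨ t ≠ 0 := by tauto
  set f := (Phi d m c (nu d s t)).mulVecLin with hf
  set v : Fin (d-1) → (Fin (m*d-1) → ℂ) :=
    fun l => (Matrix.diagonal lam * Theta d m s t)ᵀ l with hv
  have hvapp : ∀ (l : Fin (d-1)) (j : Fin (m*d-1)), v l j = lam j * Theta d m s t j l := by
    intro l j
    show (Matrix.diagonal lam * Theta d m s t)ᵀ l j = _
    rw [Matrix.transpose_apply, Matrix.diagonal_mul]
  have hindep : LinearIndependent ℂ v := by
    by_cases ht : t = 0
    · have hs : s ≠ 0 := by tauto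
      subst ht
      apply tri_indep v (fun l => ⟨l.1+(m-1)*d, by omega⟩)
      · intro k
        rw [hvapp]
        simp only [Theta]
        rw [if_pos ⟨by omega, by omega⟩,
          show k.1+(m-1)*d - k.1 = (m-1)*d by omega, Nat.sub_self, pow_zero, Nat.choose_self]
        refine mul_ne_zero (hlam0 _) ?_
        simp only [Nat.cast_one, mul_one, one_mul]
        exact mul_ne_zero (pow_ne_zero _ (by norm_num)) (pow_ne_zero _ hs)
      · intro k k' hlt
        rw [hvapp]
        simp only [Theta]
        rw [if_pos ⟨by omega, by omega⟩,
          show (m-1)*d - (k.1+(m-1)*d - k'.1) = k'.1 - k.1 by omega,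
          zero_pow (by omega : k'.1 - k.1 ≠ 0)]
        ring
    · apply tri_indep v (fun l => ⟨l.1, by omega⟩)
      · intro k
        rw [hvapp]
        simp only [Theta]
        rw [if_pos ⟨le_rfl, by omega⟩, Nat.sub_self, pow_zero, Nat.choose_zero_right,
          pow_zero, Nat.sub_zero]
        refine mul_ne_zero (hlam0 _) ?_
        simp only [Nat.cast_one, mul_one, one_mul]
        exact pow_ne_zero _ ht
      · intro k k' hlt
        rw [hvapp]
        simp only [Theta]
        rw [if_neg (by intro hcon; have := hcon.1; omega)]
        ring
  have hcol : ∀ l : Fin (d-1), f (v l) = 0 := by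
    intro l
    have heq : f (v l) = fun i0 => (Phi d m c (nu d s t)
        * (Matrix.diagonal lam * Theta d m s t)) i0 l := by
      funext i0
      rw [hf, Matrix.mulVecLin_apply]
      simp only [Matrix.mulVec, dotProduct, hv, Matrix.transpose_apply, Matrix.mul_apply]
    rw [heq, hprod]
    rfl
  have hrn := LinearMap.finrank_range_add_finrank_ker f
  rw [Module.finrank_fintype_fun_eq_card, Fintype.card_fin] at hrn
  have hrange : (m-1)*d ≤ Module.finrank ℂ (LinearMap.range f) := by
    rcases hst' with hs | ht
    · set u : Fin ((m-1)*d) → (Fin ((m-1)*d+1) → ℂ) :=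
        fun k i0 => Phi d m c (nu d s t) i0 ⟨k.1, by omega⟩ with hu
      have hui : LinearIndependent ℂ u := by
        apply tri_indep' u (fun k => ⟨k.1+1, by omega⟩)
        · intro k
          simp only [hu, Phi]
          rw [dif_pos ⟨by omega, by omega⟩, hc (k.1+1) (by omega) (by omega) (k.1+1+1)]
          simp only [nu]
          rw [show k.1+1-(k.1+1) = 0 by omega, Nat.sub_zero, pow_zero, mul_one]
          exact mul_ne_zero
            (Int.cast_ne_zero.mpr (cf_bottom d ((m-1)*d) (k.1+1) (by omega) (by omega)))
            (pow_ne_zero _ hs)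
        · intro k k' hlt
          simp only [hu, Phi]
          rw [dif_neg (by intro hcon; have := hcon.1; omega)]
      have hsub : Submodule.span ℂ (Set.range u) ≤ LinearMap.range f := by
        rw [hf, Matrix.range_mulVecLin]
        refine Submodule.span_le.mpr ?_
        rintro _ ⟨k, rfl⟩
        refine Submodule.subset_span ⟨⟨k.1, by omega⟩, ?_⟩
        funext i0
        simp [hu, Matrix.transpose_apply]
      calc (m-1)*d = Module.finrank ℂ (Submodule.span ℂ (Set.range u)) := by
            rw [finrank_span_eq_card hui, Fintype.card_fin]
        _ ≤ Module.finrank ℂ (LinearMap.range f) := Submodule.finrank_mono hsub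
    · set u : Fin ((m-1)*d) → (Fin ((m-1)*d+1) → ℂ) :=
        fun k i0 => Phi d m c (nu d s t) i0 ⟨d-1+k.1, by omega⟩ with hu
      have hui : LinearIndependent ℂ u := by
        apply tri_indep u (fun k => ⟨k.1, by omega⟩)
        · intro k
          simp only [hu, Phi]
          rw [dif_pos ⟨by omega, by omega⟩, hc (d-1+k.1+1) (by omega) (by omega) (k.1+1)]
          simp only [nu]
          rw [show d-1+k.1+1-k.1 = d by omega, Nat.sub_self, pow_zero, one_mul,
            show d-1+k.1+1 = (k.1+1)+d-1 by omega]
          exact mul_ne_zero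
            (Int.cast_ne_zero.mpr (cf_top d ((m-1)*d) (k.1+1) (by omega) (by omega) (by omega)))
            (pow_ne_zero _ ht)
        · intro k k' hlt
          simp only [hu, Phi]
          rw [dif_neg (by intro hcon; have := hcon.2; omega)]
      have hsub : Submodule.span ℂ (Set.range u) ≤ LinearMap.range f := by
        rw [hf, Matrix.range_mulVecLin]
        refine Submodule.span_le.mpr ?_
        rintro _ ⟨k, rfl⟩
        refine Submodule.subset_span ⟨⟨d-1+k.1, by omega⟩, ?_⟩
        funext i0
        simp [hu, Matrix.transpose_apply]
      calc (m-1)*d = Module.finrank ℂ (Submodule.span ℂ (Set.range u)) := by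
            rw [finrank_span_eq_card hui, Fintype.card_fin]
        _ ≤ Module.finrank ℂ (LinearMap.range f) := Submodule.finrank_mono hsub
  have hspanv : Module.finrank ℂ (Submodule.span ℂ (Set.range v)) = d-1 := by
    rw [finrank_span_eq_card hindep, Fintype.card_fin]
  have hlesp : Submodule.span ℂ (Set.range v) ≤ LinearMap.ker f :=
    Submodule.span_le.mpr (by rintro _ ⟨l, rfl⟩; exact LinearMap.mem_ker.mpr (hcol l))
  have hkereq : LinearMap.ker f = Submodule.span ℂ (Set.range v) := by
    refine (Submodule.eq_of_le_of_finrank_le hlesp ?_).symm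
    rw [hspanv]
    omega
  exact ⟨hindep, hkereq⟩
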